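/- Let G be a finitely generated group whose word problem WP(G) is recursively enumerable. Then the one-or-less subshift X_{≤1} ⊆ {0,1}^G is effectively closed if and only if WP(G) is decidable. -/

import Mathlib

open scoped Classical

noncomputable section

namespace SDG

/-! ### Relativized computability -/

/-- Partial recursive functions `ℕ →. ℕ` relative to an oracle `O`. -/
inductive NatPartrecIn (O : ℕ →. ℕ) : (ℕ →. ℕ) → Prop
  | oracle : NatPartrecIn O O
  | zero : NatPartrecIn O (pure 0)
  | succ : NatPartrecIn O Nat.succ
  | left : NatPartrecIn O ↑fun n : ℕ => n.unpair.1
  | right : NatPartrecIn O ↑fun n : ℕ => n.unpair.2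
  | pair {f g} : NatPartrecIn O f → NatPartrecIn O g →
      NatPartrecIn O fun n => Nat.pair <$> f n <*> g n
  | comp {f g} : NatPartrecIn O f → NatPartrecIn O g →
      NatPartrecIn O fun n => g n >>= f
  | prec {f g} : NatPartrecIn O f → NatPartrecIn O g →
      NatPartrecIn O (Nat.unpaired fun a n =>
        n.rec (f a) fun y IH => do let i ← IH; g (Nat.pair a (Nat.pair y i)))
  | rfind {f} : NatPartrecIn O f →
      NatPartrecIn O fun a => Nat.rfind fun n => (fun m => m = 0) <$> f (Nat.pair a n)

/-- A partial function between `Primcodable` types is partial recursive in the oracle `O`. -/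
def PartrecIn (O : ℕ →. ℕ) {α σ : Type} [Primcodable α] [Primcodable σ] (f : α →. σ) : Prop :=
  NatPartrecIn O fun n =>
    Part.bind (Part.ofOption (Encodable.decode (α := α) n)) fun a => (f a).map Encodable.encode

/-- A predicate is recursively enumerable in the oracle `O` if it is the domain of a partial
function recursive in `O`. -/
def RePredIn (O : ℕ →. ℕ) {α : Type} [Primcodable α] (p : α → Prop) : Prop :=
  PartrecIn O fun a => Part.assert (p a) fun _ => Part.some ()

/-- The characteristic function (as an oracle `ℕ →. ℕ`) of a set `L` of elements of a
`Primcodable` type: on the code of an element of `L` it answers `1`, elsewhere `0`. -/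
def charFun {α : Type} [Primcodable α] (L : Set α) : ℕ →. ℕ :=
  fun n => Part.some (if ∃ a ∈ L, Encodable.encode a = n then 1 else 0)

/-! ### Finitely generated groups, words and pattern codings -/

variable {G : Type} [Group G]

/-- The group element represented by a word over the generators `S`. -/
def wordEval {k : ℕ} (S : Fin k → G) (w : List (Fin k)) : G :=
  (w.map S).prod

/-- `S : Fin k → G` is a finite symmetric generating family containing the identity. -/
def IsGenData {k : ℕ} (S : Fin k → G) : Prop :=
  (∃ i, S i = 1) ∧ (∀ i, ∃ j, S j = (S i)⁻¹) ∧ Subgroup.closure (Set.range S) = ⊤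

/-- The word problem of `G` with respect to the generating family `S`. -/
def WP {k : ℕ} (S : Fin k → G) : Set (List (Fin k)) :=
  {w | wordEval S w = 1}

/-- A pattern coding over the alphabet `A`: a finite list of pairs (word, symbol). -/
abbrev PatternCoding (k : ℕ) (A : Type) : Type :=
  List (List (Fin k) × A)

/-- The subshift defined by a set `C` of pattern codings: configurations in which no translate
of a coded pattern occurs. -/
def XC {k : ℕ} (S : Fin k → G) {A : Type} (C : Set (PatternCoding k A)) : Set (G → A) :=
  {x | ¬ ∃ (g : G) (c : PatternCoding k A), c ∈ C ∧ ∀ p ∈ c, x (g * wordEval S p.1) = p.2}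

/-- A set is effectively closed if it is defined by a recursively enumerable set of
pattern codings. -/
def EffectivelyClosed {k : ℕ} (S : Fin k → G) {A : Type} [Primcodable A]
    (X : Set (G → A)) : Prop :=
  ∃ C : Set (PatternCoding k A), REPred (· ∈ C) ∧ X = XC S C

/-- A set is `G`-effectively closed if it is defined by a set of pattern codings which is
recursively enumerable with oracle the word problem of `G`. -/
def GEffectivelyClosed {k : ℕ} (S : Fin k → G) {A : Type} [Primcodable A]
    (X : Set (G → A)) : Prop :=
  ∃ C : Set (PatternCoding k A), RePredIn (charFun (WP S)) (· ∈ C) ∧ X = XC S C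

/-- A pattern coding is consistent if words representing the same group element receive the
same symbol. -/
def Consistent {k : ℕ} (S : Fin k → G) {A : Type} (c : PatternCoding k A) : Prop :=
  ∀ p ∈ c, ∀ q ∈ c, wordEval S p.1 = wordEval S q.1 → p.2 = q.2

/-! ### Subshifts, SFTs, sofic subshifts -/

/-- `X ⊆ A^G` is a subshift: closed (for the product of the discrete topology) and
shift-invariant. -/
def IsSubshift {A : Type} (X : Set (G → A)) : Prop :=
  (letI : TopologicalSpace A := ⊥; IsClosed X) ∧
    ∀ x ∈ X, ∀ g : G, (fun h => x (g⁻¹ * h)) ∈ X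

/-- A pattern with finite support over the alphabet `A`. -/
structure Pattern (G : Type) (A : Type) where
  supp : Finset G
  val : (g : G) → g ∈ supp → A

/-- The pattern `p` occurs in the configuration `x` at position `g`. -/
def PatternOccurs {A : Type} (p : Pattern G A) (x : G → A) (g : G) : Prop :=
  ∀ (h : G) (hh : h ∈ p.supp), x (g * h) = p.val h hh

/-- The subshift defined by a set of forbidden patterns. -/
def XPat {A : Type} (Fs : Set (Pattern G A)) : Set (G → A) :=
  {x | ¬ ∃ (g : G) (p : Pattern G A), p ∈ Fs ∧ PatternOccurs p x g}

/-- A subshift of finite type: defined by a finite set of forbidden patterns. -/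
def IsSFT {A : Type} (X : Set (G → A)) : Prop :=
  ∃ Fs : Set (Pattern G A), Fs.Finite ∧ X = XPat Fs

/-- A witness that `X` is sofic: an SFT `Y` over a finite alphabet `B` together with a factor
code (continuous shift-equivariant surjection) from `Y` onto `X`. -/
structure SoficVia (G : Type) [Group G] {A : Type} (X : Set (G → A)) : Type 1 where
  B : Type
  finB : Fintype B
  Y : Set (G → B)
  sft : IsSFT Y
  subY : IsSubshift Y
  phi : (G → B) → (G → A)
  cont : letI : TopologicalSpace B := ⊥
         letI : TopologicalSpace A := ⊥
         ContinuousOn phi Y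
  equiv : ∀ y ∈ Y, ∀ g : G, phi (fun h => y (g⁻¹ * h)) = fun h => phi y (g⁻¹ * h)
  image : phi '' Y = X

/-- A subshift is sofic if it is the image of an SFT under a factor code. -/
def IsSofic {A : Type} (X : Set (G → A)) : Prop :=
  Nonempty (SoficVia G X)

/-- A factor code from `X` onto `Y`: continuous (discrete product topologies),
shift-equivariant and surjective. -/
def FactorCode {A B : Type} (X : Set (G → A)) (Y : Set (G → B))
    (φ : (G → A) → (G → B)) : Prop :=
  (letI : TopologicalSpace A := ⊥
   letI : TopologicalSpace B := ⊥
   ContinuousOn φ X) ∧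
  (∀ x ∈ X, ∀ g : G, φ (fun h => x (g⁻¹ * h)) = fun h => φ x (g⁻¹ * h)) ∧
  φ '' X = Y

/-- Two subshifts are conjugate if there is a shift-equivariant homeomorphism between them. -/
def Conjugate {A B : Type} (X : Set (G → A)) (Y : Set (G → B)) : Prop :=
  ∃ (φ : (G → A) → (G → B)) (ψ : (G → B) → (G → A)),
    FactorCode X Y φ ∧ FactorCode Y X ψ ∧
    (∀ x ∈ X, ψ (φ x) = x) ∧ (∀ y ∈ Y, φ (ψ y) = y)

/-- The one-or-less subshift: configurations with at most one occurrence of the symbol `1`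
(represented by `true`). -/
def Xle1 (G : Type) : Set (G → Bool) :=
  {x | ∀ g h : G, x g = true → x h = true → g = h}

/-! ### `G`-machines -/

/-- A `G`-machine: finite set of states, finite tape alphabet `A` with a blank symbol, initial
state, accepting states, and a transition function moving with the generators `Fin k`. -/
structure GMachine (k : ℕ) (A : Type) : Type 1 where
  Q : Type
  finQ : Fintype Q
  blank : A
  q0 : Q
  QF : Set Q
  delta : A × Q → A × Q × Fin k

/-- One step of a `G`-machine in the fixed head model: if `δ(x(1),q) = (a,q',s)` then the new
configuration is `σ_{s⁻¹} x̃` where `x̃` is `x` with the value at `1` replaced by `a`. -/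
def GMachine.step {k : ℕ} {A : Type} (M : GMachine k A) (S : Fin k → G) :
    (G → A) × M.Q → (G → A) × M.Q :=
  fun xq =>
    let t := M.delta (xq.1 1, xq.2)
    let xt : G → A := Function.update xq.1 1 t.1
    (fun h => xt (S t.2.2 * h), t.2.1)

/-- The configuration which equals the pattern `p` on its support and `blank` elsewhere. -/
def Pattern.config {A : Type} (p : Pattern G A) (blank : A) : G → A :=
  fun g => if h : g ∈ p.supp then p.val g h else blank

/-- The `G`-machine `M` accepts the pattern `p` if starting from the configuration `x^p` in the
initial state it eventually reaches an accepting state. -/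
def GMachine.Accepts {k : ℕ} {A : Type} (M : GMachine k A) (S : Fin k → G)
    (p : Pattern G A) : Prop :=
  ∃ n : ℕ, ((M.step S)^[n] (p.config M.blank, M.q0)).2 ∈ M.QF

/-- A set of patterns is `G`-recursively enumerable if some `G`-machine accepts exactly its
elements. -/
def GRecEnum {k : ℕ} (S : Fin k → G) {A : Type} (L : Set (Pattern G A)) : Prop :=
  ∃ M : GMachine k A, ∀ p : Pattern G A, M.Accepts S p ↔ p ∈ L

/-- The consistent pattern coding `c` defines the pattern `p`. -/
def Defines {k : ℕ} (S : Fin k → G) {A : Type} (c : PatternCoding k A)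
    (p : Pattern G A) : Prop :=
  (∀ g : G, g ∈ p.supp ↔ ∃ q ∈ c, wordEval S q.1 = g) ∧
  ∀ q ∈ c, ∀ hg : wordEval S q.1 ∈ p.supp, p.val (wordEval S q.1) hg = q.2

/-- `p(C)`: the set of patterns defined by the consistent pattern codings of `C`. -/
def patternsOf {k : ℕ} (S : Fin k → G) {A : Type} (C : Set (PatternCoding k A)) :
    Set (Pattern G A) :=
  {p | ∃ c ∈ C, Consistent S c ∧ Defines S c p}

/-- A set of patterns is closed by extensions if any pattern extending a pattern of the set
also belongs to the set. -/
def ClosedByExtensions {A : Type} (L : Set (Pattern G A)) : Prop :=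
  ∀ (p₁ p₂ : Pattern G A) (hsub : p₁.supp ⊆ p₂.supp),
    (∀ (g : G) (hg : g ∈ p₁.supp), p₂.val g (hsub hg) = p₁.val g hg) →
    p₁ ∈ L → p₂ ∈ L

/-! ### Balls, ends, amenability -/

/-- The ball of radius `n` in the word metric given by `S`. -/
def ballS {k : ℕ} (S : Fin k → G) (n : ℕ) : Set G :=
  {x | ∃ w : List (Fin k), w.length ≤ n ∧ wordEval S w = x}

/-- Adjacency in the Cayley graph restricted to the set `V`. -/
def Adj {k : ℕ} (S : Fin k → G) (V : Set G) (a b : G) : Prop :=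
  a ∈ V ∧ b ∈ V ∧ ∃ i, a * S i = b

/-- Reachability inside `V` in the Cayley graph of `(G,S)`. -/
def Reach {k : ℕ} (S : Fin k → G) (V : Set G) (a b : G) : Prop :=
  Relation.ReflTransGen (Adj S V) a b

/-- `G` has at least two ends: for some `n`, the complement of the ball of radius `n` in the
Cayley graph has at least two infinite connected components. -/
def HasTwoOrMoreEnds {k : ℕ} (S : Fin k → G) : Prop :=
  ∃ (n : ℕ) (x y : G), x ∉ ballS S n ∧ y ∉ ballS S n ∧
    {z | Reach S (ballS S n)ᶜ x z}.Infinite ∧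
    {z | Reach S (ballS S n)ᶜ y z}.Infinite ∧
    ¬ Reach S (ballS S n)ᶜ x y

/-- The Følner condition: `G` is amenable. -/
def FolnerAmenable (G : Type) [Group G] : Prop :=
  ∀ (K : Finset G) (ε : ℝ), 0 < ε →
    ∃ F : Finset G, F.Nonempty ∧ ∀ k ∈ K,
      ((F \ F.image (fun x => x * k)).card : ℝ) < ε * F.card

/-! ### `G × ℤ`, presentations, hardness and the domino problems -/

/-- Generators of `G × ℤ`: the generators of `G` paired with `0`, together with `(1,±1)`. -/
def prodGens {k : ℕ} (S : Fin k → G) : Fin (k + 2) → G × Multiplicative ℤ :=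
  fun i =>
    if h : (i : ℕ) < k then (S ⟨i, h⟩, 1)
    else if (i : ℕ) = k then (1, Multiplicative.ofAdd 1)
    else (1, Multiplicative.ofAdd (-1))

/-- The element of the free group over the generator indices represented by a word. -/
def freeWord {k : ℕ} (w : List (Fin k)) : FreeGroup (Fin k) :=
  (w.map FreeGroup.of).prod

/-- `G` is recursively presented with respect to `S`: there is a recursively enumerable set of
relators (words over the generators) whose normal closure in the free group over the
generator indices is the kernel of the evaluation map. -/
def RecursivelyPresented {k : ℕ} (S : Fin k → G) : Prop :=
  ∃ R : Set (List (Fin k)), REPred (· ∈ R) ∧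
    MonoidHom.ker (FreeGroup.lift S) = Subgroup.normalClosure (freeWord '' R)

/-- `L` is hard for the class of predicates recursively enumerable in the oracle `O`
(equivalently, hard for the halting problem of machines with oracle `O`): every
such predicate many-one reduces to `L` via a computable function. -/
def OracleREHard {α : Type} [Primcodable α] (O : ℕ →. ℕ) (L : Set α) : Prop :=
  ∀ p : ℕ → Prop, RePredIn O p → ∃ f : ℕ → α, Computable f ∧ ∀ n, p n ↔ f n ∈ L

/-- The domino problem of `(K,T)`: pairs `(N, F)` of an alphabet size and a finite list of
pattern codings over `ℕ` such that no configuration with symbols `< N` avoids `F`. -/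
def DP {K : Type} [Group K] {m : ℕ} (T : Fin m → K) : Set (ℕ × List (PatternCoding m ℕ)) :=
  {q | ¬ ∃ x : K → ℕ, (∀ g, x g < q.1) ∧ x ∈ XC T {c | c ∈ q.2}}

/-- The origin constrained domino problem of `(K,T)`: triples `((N,a),F)` such that no
configuration with symbols `< N` and the symbol `a` at the origin avoids `F`. -/
def OCDP {K : Type} [Group K] {m : ℕ} (T : Fin m → K) :
    Set ((ℕ × ℕ) × List (PatternCoding m ℕ)) :=
  {q | ¬ ∃ x : K → ℕ, (∀ g, x g < q.1.1) ∧ x 1 = q.1.2 ∧ x ∈ XC T {c | c ∈ q.2}}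


/-! ### Auxiliary material for Statement 10 -/

section Statement10

open Nat.Partrec (Code)
open Nat.Partrec.Code

theorem isSome_evaln_mono' {s s' : ℕ} (h : s ≤ s') {c : Code} {n : ℕ}
    (hs : (evaln s c n).isSome) : (evaln s' c n).isSome := by
  obtain ⟨x, hx⟩ := Option.isSome_iff_exists.1 hs
  exact Option.isSome_iff_exists.2 ⟨x, evaln_mono h hx⟩

theorem rePred_iff_evaln {α : Type} [Primcodable α] {p : α → Prop} (hp : REPred p) :
    ∃ c : Code, ∀ a, p a ↔ ∃ s, (evaln s c (Encodable.encode a)).isSome := by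
  obtain ⟨c, hc⟩ := exists_code.1 hp
  have h1 : ∀ a : α, eval c (Encodable.encode a)
      = (Part.assert (p a) fun _ => Part.some ()).map Encodable.encode := by
    intro a
    rw [hc]
    simp [Encodable.encodek]
  refine ⟨c, fun a => ⟨fun h => ?_, fun ⟨s, hs⟩ => ?_⟩⟩
  · have hd : (eval c (Encodable.encode a)).Dom := by
      rw [h1 a]; exact ⟨h, trivial⟩
    obtain ⟨x, hx⟩ := Part.dom_iff_mem.1 hd
    obtain ⟨s, hs⟩ := evaln_complete.1 hx
    exact ⟨s, Option.isSome_iff_exists.2 ⟨x, hs⟩⟩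
  · obtain ⟨x, hx⟩ := Option.isSome_iff_exists.1 hs
    have hx' : x ∈ eval c (Encodable.encode a) := evaln_sound hx
    have hd : (eval c (Encodable.encode a)).Dom := Part.dom_iff_mem.2 ⟨x, hx'⟩
    rw [h1 a] at hd
    exact hd.1

theorem rePred_of_exists_bool {α β : Type} [Primcodable α] [Primcodable β] {f : α → β → Bool}
    (hf : Computable₂ f) : REPred fun a => ∃ b, f a b = true := by
  have hgt : Computable₂ fun (a : α) (n : ℕ) =>
      ((Encodable.decode (α := β) n).map (f a)).getD false :=
    Computable.option_getD
      (Computable.option_map (Computable.decode.comp Computable.snd)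
        (hf.comp (Computable.fst.comp Computable.fst) Computable.snd))
      (Computable.const false)
  have hrf : Partrec fun a : α => Nat.rfind fun n =>
      (((Encodable.decode (α := β) n).map (f a)).getD false : Part Bool) :=
    Partrec.rfind hgt.partrec₂
  have := hrf.map ((Computable.const ()).comp Computable.fst).to₂
  refine this.of_eq fun a => ?_
  have key : (∃ n, true ∈ ((((Encodable.decode (α := β) n).map (f a)).getD false : Bool) : Part Bool)
      ∧ ∀ m < n, ((((Encodable.decode (α := β) m).map (f a)).getD false : Bool) : Part Bool).Dom)
      ↔ ∃ b, f a b = true := by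
    constructor
    · rintro ⟨n, hn, -⟩
      simp only [Part.coe_some, Part.mem_some_iff] at hn
      cases hd : Encodable.decode (α := β) n with
      | none => rw [hd] at hn; simp at hn
      | some b =>
        rw [hd] at hn
        exact ⟨b, by simpa using hn.symm⟩
    · rintro ⟨b, hb⟩
      refine ⟨Encodable.encode b, ?_, fun m _ => trivial⟩
      simp only [Part.coe_some, Part.mem_some_iff]
      simp [Encodable.encodek, hb]
  by_cases hpb : ∃ b, f a b = true
  · rw [Part.assert_pos hpb]
    refine Part.eq_some_iff.2 ?_
    have hdom : (Nat.rfind fun n =>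
        (((Encodable.decode (α := β) n).map (f a)).getD false : Part Bool)).Dom :=
      Nat.rfind_dom.2 (key.2 hpb)
    exact Part.mem_map _ (Part.get_mem hdom)
  · rw [Part.assert_neg hpb]
    refine Part.eq_none_iff'.2 fun hdom => ?_
    rw [Part.map_Dom] at hdom; replace hdom := Nat.rfind_dom.1 hdom
    exact hpb (key.1 hdom)

open Primrec (list_foldr list_flatMap list_cons dom_finite) in
theorem primrec_list_all {α β : Type} [Primcodable α] [Primcodable β]
    {f : α → List β} {g : α → β → Bool} (hf : Primrec f) (hg : Primrec₂ g) :
    Primrec fun a => (f a).all (g a) := by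
  have h : Primrec₂ fun (a : α) (p : β × Bool) => g a p.1 && p.2 :=
    (dom_finite (fun p : Bool × Bool => p.1 && p.2)).comp
      ((hg.comp Primrec.fst (Primrec.fst.comp Primrec.snd)).pair (Primrec.snd.comp Primrec.snd))
  exact (list_foldr hf (Primrec.const true) h).of_eq fun a => by
    induction f a with
    | nil => rfl
    | cons b l ih => simp [List.all_cons, ih]

open Primrec (list_foldr dom_finite) in
theorem primrec_list_any {α β : Type} [Primcodable α] [Primcodable β]
    {f : α → List β} {g : α → β → Bool} (hf : Primrec f) (hg : Primrec₂ g) :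
    Primrec fun a => (f a).any (g a) := by
  have h : Primrec₂ fun (a : α) (p : β × Bool) => g a p.1 || p.2 :=
    (dom_finite (fun p : Bool × Bool => p.1 || p.2)).comp
      ((hg.comp Primrec.fst (Primrec.fst.comp Primrec.snd)).pair (Primrec.snd.comp Primrec.snd))
  exact (list_foldr hf (Primrec.const false) h).of_eq fun a => by
    induction f a with
    | nil => rfl
    | cons b l ih => simp [List.any_cons, ih]

theorem primrec_list_max {α : Type} [Primcodable α] {f : α → List ℕ} (hf : Primrec f) :
    Primrec fun a => (f a).foldr max 0 := by
  have h : Primrec₂ fun (_ : α) (p : ℕ × ℕ) => max p.1 p.2 :=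
    (Primrec.nat_max.comp (Primrec.fst.comp Primrec.snd) (Primrec.snd.comp Primrec.snd)).to₂
  exact (Primrec.list_foldr hf (Primrec.const 0) h).of_eq fun a => rfl

theorem le_foldr_max {l : List ℕ} {x : ℕ} (hx : x ∈ l) : x ≤ l.foldr max 0 := by
  induction l with
  | nil => simp at hx
  | cons b t ih =>
    rcases List.mem_cons.1 hx with h | h
    · subst h; exact le_max_left _ _
    · exact le_trans (ih h) (le_max_right _ _)

/-- All boolean lists of length `n`. -/
def allLists : ℕ → List (List Bool) :=
  Nat.rec [[]] fun _ ih => ih.flatMap fun l => [true :: l, false :: l]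

theorem primrec_allLists : Primrec allLists := by
  have h₂ : Primrec₂ fun (_ : ℕ × List (List Bool)) (l : List Bool) =>
      [true :: l, false :: l] :=
    (Primrec.list_cons.comp (Primrec.list_cons.comp (Primrec.const true) Primrec.snd)
      (Primrec.list_cons.comp (Primrec.list_cons.comp (Primrec.const false) Primrec.snd)
        (Primrec.const []))).to₂
  exact Primrec.nat_rec₁ _ (Primrec.list_flatMap Primrec.snd h₂).to₂

theorem mem_allLists {n : ℕ} {l : List Bool} : l ∈ allLists n ↔ l.length = n := by
  induction n generalizing l with
  | zero =>
    simp [allLists, List.length_eq_zero_iff]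
  | succ n ih =>
    show l ∈ (allLists n).flatMap _ ↔ _
    rw [List.mem_flatMap]
    constructor
    · rintro ⟨l', hl', hm⟩
      have := ih.1 hl'
      have hm' : l = true :: l' ∨ l = false :: l' := by simpa using hm
      rcases hm' with h | h <;> (subst h; simp [this])
    · intro hl
      cases l with
      | nil => simp at hl
      | cons b t =>
        refine ⟨t, ih.2 (by simpa using hl), ?_⟩
        cases b <;> simp

theorem getD_range_map {q : ℕ → Bool} {j m : ℕ} (h : j < m) :
    (((List.range m).map q).getD j false) = q j := by
  simp [List.getD_eq_getElem?_getD, List.getElem?_map, List.getElem?_range, h]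

theorem exists_uniform_stage {α : Type} (l : List α) (good : α → ℕ → Prop)
    (mono : ∀ x s s', s ≤ s' → good x s → good x s') (h : ∀ x ∈ l, ∃ s, good x s) :
    ∃ s, ∀ x ∈ l, good x s := by
  induction l with
  | nil => exact ⟨0, fun x hx => absurd hx (List.not_mem_nil)⟩
  | cons b t ih =>
    obtain ⟨s₁, hs₁⟩ := h b (List.mem_cons_self)
    obtain ⟨s₂, hs₂⟩ := ih fun x hx => h x (List.mem_cons_of_mem _ hx)
    refine ⟨max s₁ s₂, fun x hx => ?_⟩
    rcases List.mem_cons.1 hx with rfl | hx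
    · exact mono _ _ _ (le_max_left _ _) hs₁
    · exact mono _ _ _ (le_max_right _ _) (hs₂ x hx)

/-! #### Words -/

theorem wordEval_nil {G : Type} [Group G] {k : ℕ} (S : Fin k → G) : wordEval S [] = 1 := rfl

theorem wordEval_cons {G : Type} [Group G] {k : ℕ} (S : Fin k → G) (i : Fin k)
    (w : List (Fin k)) : wordEval S (i :: w) = S i * wordEval S w := by
  simp [wordEval]

theorem wordEval_append {G : Type} [Group G] {k : ℕ} (S : Fin k → G) (u v : List (Fin k)) :
    wordEval S (u ++ v) = wordEval S u * wordEval S v := by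
  simp [wordEval]

/-- The formal inverse of a word, given an inversion map on the generators. -/
def invW {k : ℕ} (τ : Fin k → Fin k) (w : List (Fin k)) : List (Fin k) :=
  (w.map τ).reverse

theorem primrec_invW {k : ℕ} (τ : Fin k → Fin k) : Primrec (invW τ) :=
  Primrec.list_reverse.comp
    (Primrec.list_map Primrec.id ((Primrec.dom_finite τ).comp Primrec.snd).to₂)

theorem wordEval_invW {G : Type} [Group G] {k : ℕ} {S : Fin k → G} {τ : Fin k → Fin k}
    (hτ : ∀ i, S (τ i) = (S i)⁻¹) (w : List (Fin k)) :
    wordEval S (invW τ w) = (wordEval S w)⁻¹ := by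
  induction w with
  | nil => simp [invW, wordEval_nil]
  | cons i w ih =>
    have : invW τ (i :: w) = invW τ w ++ [τ i] := by simp [invW]
    rw [this, wordEval_append, ih, wordEval_cons]
    simp [hτ, wordEval, mul_comm]

theorem exists_word {G : Type} [Group G] {k : ℕ} {S : Fin k → G} {τ : Fin k → Fin k}
    (hτ : ∀ i, S (τ i) = (S i)⁻¹) (hgen : Subgroup.closure (Set.range S) = ⊤) (g : G) :
    ∃ w : List (Fin k), wordEval S w = g := by
  have hg : g ∈ Subgroup.closure (Set.range S) := by rw [hgen]; trivial
  refine Subgroup.closure_induction ?_ ?_ ?_ ?_ hg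
  · rintro x ⟨i, rfl⟩
    exact ⟨[i], by simp [wordEval]⟩
  · exact ⟨[], rfl⟩
  · rintro x y - - ⟨u, rfl⟩ ⟨v, rfl⟩
    exact ⟨u ++ v, wordEval_append S u v⟩
  · rintro x - ⟨u, rfl⟩
    exact ⟨invW τ u, wordEval_invW hτ u⟩

/-- Witness data for the semi-decision procedure: origin/target labels, a list of
translated labelled pattern codings, and a stage. -/
abbrev Wit (k : ℕ) : Type :=
  ((ℕ × ℕ) × List (List (Fin k) × List (List (Fin k) × (Bool × ℕ)))) × ℕ

/-- All labelled words appearing in a witness. -/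
def Plist {k : ℕ} (w : List (Fin k)) (t : Wit k) : List (List (Fin k) × ℕ) :=
  ([], t.1.1.1) :: (w, t.1.1.2) :: t.1.2.flatMap fun uc => uc.2.map fun q => (uc.1 ++ q.1, q.2.2)

/-- The verifier for the semi-decision procedure of the complement of the word problem. -/
def verif {k : ℕ} (τ : Fin k → Fin k) (cW cC : Code) (w : List (Fin k)) (t : Wit k) : Bool :=
  ((Plist w t).all fun p => (Plist w t).all fun q =>
      !(decide (p.2 = q.2)) ||
        (evaln t.2 cW (Encodable.encode (invW τ p.1 ++ q.1))).isSome) &&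
  ((t.1.2.all fun uc =>
      (evaln t.2 cC (Encodable.encode (uc.2.map fun q => (q.1, q.2.1)))).isSome) &&
  ((allLists (((Plist w t).map Prod.snd).foldr max 0 + 1)).all fun bl =>
      !(bl.getD t.1.1.1 false) || (!(bl.getD t.1.1.2 false) ||
      t.1.2.any fun uc => uc.2.all fun q => bl.getD q.2.2 false == q.2.1)))

theorem primrec_verif {k : ℕ} (τ : Fin k → Fin k) (cW cC : Code) :
    Primrec₂ (verif τ cW cC) := by
  have bor : Primrec (fun p : Bool × Bool => p.1 || p.2) := Primrec.dom_finite _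
  have band : Primrec (fun p : Bool × Bool => p.1 && p.2) := Primrec.dom_finite _
  have bnot : Primrec (fun b : Bool => !b) := Primrec.dom_finite _
  have beqb : Primrec (fun p : Bool × Bool => p.1 == p.2) := Primrec.dom_finite _
  have pl0 : Primrec fun a : List (Fin k) × Wit k => a.2.1.1.1 :=
    Primrec.fst.comp (Primrec.fst.comp (Primrec.fst.comp Primrec.snd))
  have pl1 : Primrec fun a : List (Fin k) × Wit k => a.2.1.1.2 :=
    Primrec.snd.comp (Primrec.fst.comp (Primrec.fst.comp Primrec.snd))
  have pL : Primrec fun a : List (Fin k) × Wit k => a.2.1.2 :=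
    Primrec.snd.comp (Primrec.fst.comp Primrec.snd)
  have ps : Primrec fun a : List (Fin k) × Wit k => a.2.2 :=
    Primrec.snd.comp Primrec.snd
  have hq : Primrec₂ fun (b : (List (Fin k) × Wit k) × (List (Fin k) × List (List (Fin k) × (Bool × ℕ))))
      (q : List (Fin k) × (Bool × ℕ)) => (b.2.1 ++ q.1, q.2.2) :=
    ((Primrec.list_append.comp (Primrec.fst.comp (Primrec.snd.comp Primrec.fst))
        (Primrec.fst.comp Primrec.snd)).pair
      (Primrec.snd.comp (Primrec.snd.comp Primrec.snd))).to₂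
  have hflat : Primrec fun a : List (Fin k) × Wit k =>
      a.2.1.2.flatMap fun uc => uc.2.map fun q => (uc.1 ++ q.1, q.2.2) :=
    Primrec.list_flatMap pL (Primrec.list_map (Primrec.snd.comp Primrec.snd) hq)
  have hP : Primrec fun a : List (Fin k) × Wit k => Plist a.1 a.2 :=
    Primrec.list_cons.comp ((Primrec.const []).pair pl0)
      (Primrec.list_cons.comp (Primrec.fst.pair pl1) hflat)
  -- part A
  have hg2 : Primrec₂ fun (x : (List (Fin k) × Wit k) × (List (Fin k) × ℕ))
      (q : List (Fin k) × ℕ) =>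
      (!(decide (x.2.2 = q.2)) ||
        (evaln x.1.2.2 cW (Encodable.encode (invW τ x.2.1 ++ q.1))).isSome) := by
    have c1 : Primrec fun y : ((List (Fin k) × Wit k) × (List (Fin k) × ℕ)) × (List (Fin k) × ℕ) =>
        !(decide (y.1.2.2 = y.2.2)) :=
      bnot.comp (Primrec.eq.comp (Primrec.snd.comp (Primrec.snd.comp Primrec.fst))
        (Primrec.snd.comp Primrec.snd)).decide
    have c2 : Primrec fun y : ((List (Fin k) × Wit k) × (List (Fin k) × ℕ)) × (List (Fin k) × ℕ) =>
        (evaln y.1.1.2.2 cW (Encodable.encode (invW τ y.1.2.1 ++ y.2.1))).isSome :=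
      Primrec.option_isSome.comp (primrec_evaln.comp
        (((ps.comp (Primrec.fst.comp Primrec.fst)).pair (Primrec.const cW)).pair
          (Primrec.encode.comp (Primrec.list_append.comp
            ((primrec_invW τ).comp (Primrec.fst.comp (Primrec.snd.comp Primrec.fst)))
            (Primrec.fst.comp Primrec.snd)))))
    exact (bor.comp (c1.pair c2)).to₂
  have hA : Primrec fun a : List (Fin k) × Wit k =>
      (Plist a.1 a.2).all fun p => (Plist a.1 a.2).all fun q =>
        !(decide (p.2 = q.2)) ||
          (evaln a.2.2 cW (Encodable.encode (invW τ p.1 ++ q.1))).isSome :=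
    primrec_list_all hP (primrec_list_all (hP.comp Primrec.fst) hg2)
  -- part B
  have hB : Primrec fun a : List (Fin k) × Wit k => a.2.1.2.all fun uc =>
      (evaln a.2.2 cC (Encodable.encode (uc.2.map fun q => (q.1, q.2.1)))).isSome := by
    have hmap : Primrec fun y : (List (Fin k) × Wit k) ×
        (List (Fin k) × List (List (Fin k) × (Bool × ℕ))) =>
        y.2.2.map fun q => (q.1, q.2.1) :=
      Primrec.list_map (Primrec.snd.comp Primrec.snd)
        (((Primrec.fst.comp Primrec.snd).pair
          (Primrec.fst.comp (Primrec.snd.comp Primrec.snd))).to₂)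
    exact primrec_list_all pL (Primrec.option_isSome.comp (primrec_evaln.comp
      (((ps.comp Primrec.fst).pair (Primrec.const cC)).pair
        (Primrec.encode.comp hmap)))).to₂
  -- part C
  have hm : Primrec fun a : List (Fin k) × Wit k =>
      ((Plist a.1 a.2).map Prod.snd).foldr max 0 + 1 :=
    Primrec.succ.comp (primrec_list_max
      (Primrec.list_map hP (Primrec.snd.comp Primrec.snd).to₂))
  have hC4 : Primrec₂ fun (z : ((List (Fin k) × Wit k) × List Bool) ×
      (List (Fin k) × List (List (Fin k) × (Bool × ℕ))))
      (q : List (Fin k) × (Bool × ℕ)) => (z.1.2.getD q.2.2 false == q.2.1) :=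
    (beqb.comp ((((Primrec.list_getD false).comp
        (Primrec.snd.comp (Primrec.fst.comp Primrec.fst))
        (Primrec.snd.comp (Primrec.snd.comp Primrec.snd)))).pair
      (Primrec.fst.comp (Primrec.snd.comp Primrec.snd)))).to₂
  have hC3 : Primrec₂ fun (y : (List (Fin k) × Wit k) × List Bool)
      (uc : List (Fin k) × List (List (Fin k) × (Bool × ℕ))) =>
      uc.2.all fun q => y.2.getD q.2.2 false == q.2.1 :=
    primrec_list_all (Primrec.snd.comp Primrec.snd) hC4
  have hC2 : Primrec₂ fun (a : List (Fin k) × Wit k) (bl : List Bool) =>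
      (!(bl.getD a.2.1.1.1 false) || (!(bl.getD a.2.1.1.2 false) ||
        a.2.1.2.any fun uc => uc.2.all fun q => bl.getD q.2.2 false == q.2.1)) := by
    have d0 : Primrec fun y : (List (Fin k) × Wit k) × List Bool =>
        !(y.2.getD y.1.2.1.1.1 false) :=
      bnot.comp ((Primrec.list_getD false).comp Primrec.snd (pl0.comp Primrec.fst))
    have d1 : Primrec fun y : (List (Fin k) × Wit k) × List Bool =>
        !(y.2.getD y.1.2.1.1.2 false) :=
      bnot.comp ((Primrec.list_getD false).comp Primrec.snd (pl1.comp Primrec.fst))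
    exact (bor.comp (d0.pair (bor.comp (d1.pair
      (primrec_list_any (pL.comp Primrec.fst) hC3))))).to₂
  have hC : Primrec fun a : List (Fin k) × Wit k =>
      (allLists (((Plist a.1 a.2).map Prod.snd).foldr max 0 + 1)).all fun bl =>
        !(bl.getD a.2.1.1.1 false) || (!(bl.getD a.2.1.1.2 false) ||
        a.2.1.2.any fun uc => uc.2.all fun q => bl.getD q.2.2 false == q.2.1) :=
    primrec_list_all (primrec_allLists.comp hm) hC2
  exact (band.comp (hA.pair (band.comp (hB.pair hC)))).to₂


theorem verif_sound {G : Type} [Group G] {k : ℕ} {S : Fin k → G} {τ : Fin k → Fin k}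
    (hτ : ∀ i, S (τ i) = (S i)⁻¹) {C : Set (PatternCoding k Bool)} {cW cC : Code}
    (specW : ∀ v : List (Fin k),
      wordEval S v = 1 ↔ ∃ s, (evaln s cW (Encodable.encode v)).isSome)
    (specC : ∀ c : PatternCoding k Bool,
      c ∈ C ↔ ∃ s, (evaln s cC (Encodable.encode c)).isSome)
    (hX : Xle1 G = XC S C) {w : List (Fin k)} {t : Wit k}
    (hv : verif τ cW cC w t = true) : wordEval S w ≠ 1 := by
  intro hw1
  rw [verif] at hv
  simp only [Bool.and_eq_true] at hv
  obtain ⟨hA, hB, hC⟩ := hv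
  rw [List.all_eq_true] at hA hB hC
  have hAe : ∀ p ∈ Plist w t, ∀ q ∈ Plist w t, p.2 = q.2 →
      wordEval S p.1 = wordEval S q.1 := by
    intro p hp q hq hpq
    have h2 := List.all_eq_true.1 (hA p hp) q hq
    have h3 : (evaln t.2 cW (Encodable.encode (invW τ p.1 ++ q.1))).isSome = true := by
      simpa [hpq] using h2
    have h4 : wordEval S (invW τ p.1 ++ q.1) = 1 := (specW _).2 ⟨t.2, h3⟩
    rw [wordEval_append, wordEval_invW hτ] at h4
    exact inv_mul_eq_one.1 h4
  set m : ℕ := ((Plist w t).map Prod.snd).foldr max 0 + 1 with hm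
  set q0 : ℕ → Bool := fun j =>
    decide (∃ p ∈ Plist w t, p.2 = j ∧ wordEval S p.1 = 1) with hq0
  set bl : List Bool := (List.range m).map q0 with hbl
  have hblmem : bl ∈ allLists m := mem_allLists.2 (by simp [hbl])
  have key : ∀ p ∈ Plist w t, bl.getD p.2 false = decide (wordEval S p.1 = 1) := by
    intro p hp
    have hlt : p.2 < m := Nat.lt_succ_of_le (le_foldr_max (List.mem_map_of_mem hp))
    rw [hbl, getD_range_map hlt, hq0]
    apply decide_eq_decide.2
    constructor
    · rintro ⟨p', hp', hpe, h1⟩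
      rw [← hAe p' hp' p hp hpe]
      exact h1
    · intro h
      exact ⟨p, hp, rfl, h⟩
  have h0mem : ([], t.1.1.1) ∈ Plist w t := by simp [Plist]
  have h1mem : (w, t.1.1.2) ∈ Plist w t := by simp [Plist]
  have b0 : bl.getD t.1.1.1 false = true := by
    rw [key _ h0mem]; simp [wordEval_nil]
  have b1 : bl.getD t.1.1.2 false = true := by
    rw [key _ h1mem]; simp [hw1]
  have hC' := hC bl hblmem
  rw [b0, b1] at hC'
  simp only [Bool.not_true, Bool.false_or] at hC'
  obtain ⟨uc, hucL, hall⟩ := List.any_eq_true.1 hC'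
  have hcmem : (uc.2.map fun q => (q.1, q.2.1)) ∈ C := (specC _).2 ⟨t.2, hB uc hucL⟩
  have hx0 : (fun g : G => decide (g = 1)) ∈ Xle1 G := by
    intro g h hg hh
    rw [of_decide_eq_true hg, of_decide_eq_true hh]
  rw [hX] at hx0
  apply hx0
  refine ⟨wordEval S uc.1, uc.2.map fun q => (q.1, q.2.1), hcmem, ?_⟩
  rintro pr hpr
  obtain ⟨q, hq, rfl⟩ := List.mem_map.1 hpr
  have hmemP : (uc.1 ++ q.1, q.2.2) ∈ Plist w t := by
    simp only [Plist, List.mem_cons]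
    right; right
    exact List.mem_flatMap.2 ⟨uc, hucL, List.mem_map.2 ⟨q, hq, rfl⟩⟩
  have hkey := key _ hmemP
  have hbq := List.all_eq_true.1 hall q hq
  rw [hkey] at hbq
  have hqv : decide (wordEval S (uc.1 ++ q.1) = 1) = q.2.1 := eq_of_beq hbq
  show decide (wordEval S uc.1 * wordEval S q.1 = 1) = q.2.1
  rw [← wordEval_append]
  exact hqv


theorem or_eq_true' {a b : Bool} : (a || b) = true ↔ a = true ∨ b = true := by simp

theorem verif_complete {G : Type} [Group G] {k : ℕ} {S : Fin k → G} {τ : Fin k → Fin k}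
    (hτ : ∀ i, S (τ i) = (S i)⁻¹) (hgen : Subgroup.closure (Set.range S) = ⊤)
    {C : Set (PatternCoding k Bool)} {cW cC : Code}
    (specW : ∀ v : List (Fin k),
      wordEval S v = 1 ↔ ∃ s, (evaln s cW (Encodable.encode v)).isSome)
    (specC : ∀ c : PatternCoding k Bool,
      c ∈ C ↔ ∃ s, (evaln s cC (Encodable.encode c)).isSome)
    (hX : Xle1 G = XC S C) {w : List (Fin k)} (hw : wordEval S w ≠ 1) :
    ∃ t : Wit k, verif τ cW cC w t = true := by
  classical
  letI : TopologicalSpace Bool := ⊥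
  haveI : DiscreteTopology Bool := ⟨rfl⟩
  set K : Set (G → Bool) := {x | x 1 = true ∧ x (wordEval S w) = true} with hK
  have hKclosed : IsClosed K := by
    have h0 : K = (fun x : G → Bool => x 1) ⁻¹' {true} ∩
        (fun x : G → Bool => x (wordEval S w)) ⁻¹' {true} := by
      ext x; simp [hK]
    rw [h0]
    exact ((isClosed_discrete _).preimage (continuous_apply 1)).inter
      ((isClosed_discrete _).preimage (continuous_apply _))
  have hKcomp : IsCompact K := hKclosed.isCompact
  set U : {gc : G × PatternCoding k Bool // gc.2 ∈ C} → Set (G → Bool) :=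
    fun i => {x | ∀ p ∈ i.1.2, x (i.1.1 * wordEval S p.1) = p.2} with hU
  have hUopen : ∀ i, IsOpen (U i) := by
    intro i
    have h1 : U i = ⋂ p ∈ {p | p ∈ i.1.2},
        {x : G → Bool | x (i.1.1 * wordEval S p.1) = p.2} := by
      ext x; simp [hU]
    rw [h1]
    refine Set.Finite.isOpen_biInter (List.finite_toSet _) fun p _ => ?_
    have h2 : {x : G → Bool | x (i.1.1 * wordEval S p.1) = p.2} =
        (fun x : G → Bool => x (i.1.1 * wordEval S p.1)) ⁻¹' {p.2} := by
      ext x; simp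
    rw [h2]
    exact (isOpen_discrete _).preimage (continuous_apply _)
  have hcover : K ⊆ ⋃ i, U i := by
    intro x hx
    obtain ⟨hx1, hxw⟩ := hx
    have hnot : x ∉ Xle1 G := fun hmem => hw (hmem (wordEval S w) 1 hxw hx1)
    rw [hX] at hnot
    obtain ⟨g, c, hc, hocc⟩ := not_not.1 hnot
    exact Set.mem_iUnion.2 ⟨⟨(g, c), hc⟩, hocc⟩
  obtain ⟨fs, hfs⟩ := hKcomp.elim_finite_subcover U hUopen hcover
  set elems : List G := 1 :: wordEval S w ::
    fs.toList.flatMap (fun i => i.1.2.map fun p => i.1.1 * wordEval S p.1) with helems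
  set label : G → ℕ := fun g => elems.idxOf g with hlabel
  have hinj : ∀ a ∈ elems, ∀ b ∈ elems, label a = label b → a = b := by
    intro a ha b hb h
    exact (List.idxOf_inj ha).1 h
  set L : List (List (Fin k) × List (List (Fin k) × (Bool × ℕ))) :=
    fs.toList.map (fun i => ((exists_word hτ hgen i.1.1).choose,
      i.1.2.map fun p => (p.1, (p.2, label (i.1.1 * wordEval S p.1))))) with hL
  set PL := Plist w (((label 1, label (wordEval S w)), L), 0) with hPL
  have hPkey : ∀ p ∈ PL, wordEval S p.1 ∈ elems ∧ p.2 = label (wordEval S p.1) := by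
    intro p hp
    rw [hPL] at hp
    simp only [Plist, List.mem_cons] at hp
    rcases hp with rfl | hp
    · exact ⟨by rw [wordEval_nil]; exact List.mem_cons_self, by rw [wordEval_nil]⟩
    rcases hp with rfl | hp
    · exact ⟨List.mem_cons_of_mem _ (List.mem_cons_self), rfl⟩
    · obtain ⟨uc, hucL, hq⟩ := List.mem_flatMap.1 hp
      rw [hL] at hucL
      obtain ⟨i, hifs, rfl⟩ := List.mem_map.1 hucL
      obtain ⟨q', hq', rfl⟩ := List.mem_map.1 hq
      obtain ⟨pp, hpp, rfl⟩ := List.mem_map.1 hq'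
      have heval : wordEval S ((exists_word hτ hgen i.1.1).choose ++ pp.1) =
          i.1.1 * wordEval S pp.1 := by
        rw [wordEval_append, (exists_word hτ hgen i.1.1).choose_spec]
      refine ⟨?_, ?_⟩
      · rw [heval]
        refine List.mem_cons_of_mem _ (List.mem_cons_of_mem _ ?_)
        exact List.mem_flatMap.2 ⟨i, hifs, List.mem_map.2 ⟨pp, hpp, rfl⟩⟩
      · rw [heval]
  set pairs := PL.flatMap (fun p => PL.map fun q => (p, q)) with hpairs
  have hmemPairs : ∀ pr ∈ pairs, pr.1 ∈ PL ∧ pr.2 ∈ PL := by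
    intro pr hpr
    rw [hpairs] at hpr
    obtain ⟨p, hp, hq⟩ := List.mem_flatMap.1 hpr
    obtain ⟨q, hq', rfl⟩ := List.mem_map.1 hq
    exact ⟨hp, hq'⟩
  have hAex : ∀ pr ∈ pairs, ∃ s,
      (!(decide (pr.1.2 = pr.2.2)) ||
        (evaln s cW (Encodable.encode (invW τ pr.1.1 ++ pr.2.1))).isSome) = true := by
    intro pr hpr
    obtain ⟨hp, hq⟩ := hmemPairs pr hpr
    by_cases hd : pr.1.2 = pr.2.2
    · obtain ⟨hmem1, hlab1⟩ := hPkey _ hp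
      obtain ⟨hmem2, hlab2⟩ := hPkey _ hq
      have heq : wordEval S pr.1.1 = wordEval S pr.2.1 :=
        hinj _ hmem1 _ hmem2 (by rw [← hlab1, ← hlab2, hd])
      have h1 : wordEval S (invW τ pr.1.1 ++ pr.2.1) = 1 := by
        rw [wordEval_append, wordEval_invW hτ, heq, inv_mul_cancel]
      obtain ⟨s, hs⟩ := (specW _).1 h1
      exact ⟨s, by rw [hs]; simp⟩
    · exact ⟨0, by simp [hd]⟩
  obtain ⟨sA, hsA⟩ := exists_uniform_stage pairs _
    (fun x s s' hss hx => by
      rcases or_eq_true'.1 hx with h | h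
      · exact or_eq_true'.2 (Or.inl h)
      · exact or_eq_true'.2 (Or.inr (isSome_evaln_mono' hss h))) hAex
  have hBex : ∀ uc ∈ L, ∃ s,
      ((evaln s cC (Encodable.encode (uc.2.map fun q => (q.1, q.2.1)))).isSome) = true := by
    intro uc hucL
    rw [hL] at hucL
    obtain ⟨i, hifs, rfl⟩ := List.mem_map.1 hucL
    have hstrip : (((i.1.2.map fun p => (p.1, (p.2, label (i.1.1 * wordEval S p.1)))).map
        fun q => (q.1, q.2.1))) = i.1.2 := by
      rw [List.map_map]
      exact List.map_id'' (fun _ => rfl) _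
    rw [hstrip]
    exact (specC _).1 i.2
  obtain ⟨sB, hsB⟩ := exists_uniform_stage L
    (fun uc s => (evaln s cC (Encodable.encode (uc.2.map fun q => (q.1, q.2.1)))).isSome = true)
    (fun x s s' hss hx => isSome_evaln_mono' hss hx) hBex
  refine ⟨(((label 1, label (wordEval S w)), L), max sA sB), ?_⟩
  rw [verif]
  simp only [Bool.and_eq_true]
  refine ⟨List.all_eq_true.2 fun p hp => List.all_eq_true.2 fun q hq => ?_,
    List.all_eq_true.2 fun uc huc => ?_, List.all_eq_true.2 fun bl _ => ?_⟩
  · have hpr : (p, q) ∈ pairs := by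
      rw [hpairs]
      refine List.mem_flatMap.2 ⟨p, ?_, List.mem_map.2 ⟨q, ?_, rfl⟩⟩
      · exact hp
      · exact hq
    have hres := hsA _ hpr
    rcases or_eq_true'.1 hres with h | h
    · exact or_eq_true'.2 (Or.inl h)
    · exact or_eq_true'.2 (Or.inr (isSome_evaln_mono' (le_max_left _ _) h))
  · exact isSome_evaln_mono' (le_max_right _ _) (hsB _ huc)
  · show (!(bl.getD (label 1) false) || (!(bl.getD (label (wordEval S w)) false) ||
      L.any fun uc => uc.2.all fun q => bl.getD q.2.2 false == q.2.1)) = true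
    cases hb0 : bl.getD (label 1) false with
    | false => simp
    | true =>
    cases hb1 : bl.getD (label (wordEval S w)) false with
    | false => simp
    | true =>
    simp only [Bool.not_true, Bool.false_or]
    set x : G → Bool := fun g => if g ∈ elems then bl.getD (label g) false else false with hx
    have hxK : x ∈ K := by
      constructor
      · show x 1 = true
        simp only [hx]
        rw [if_pos (List.mem_cons_self)]
        exact hb0
      · show x (wordEval S w) = true
        simp only [hx]
        rw [if_pos (List.mem_cons_of_mem _ (List.mem_cons_self))]
        exact hb1
    obtain ⟨i, hi, hxU⟩ := Set.mem_iUnion₂.1 (hfs hxK)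
    refine List.any_eq_true.2 ⟨((exists_word hτ hgen i.1.1).choose,
      i.1.2.map fun p => (p.1, (p.2, label (i.1.1 * wordEval S p.1)))), ?_, ?_⟩
    · rw [hL]
      exact List.mem_map.2 ⟨i, Finset.mem_toList.2 hi, rfl⟩
    · refine List.all_eq_true.2 fun q hq => ?_
      obtain ⟨pp, hpp, rfl⟩ := List.mem_map.1 hq
      have helem : i.1.1 * wordEval S pp.1 ∈ elems := by
        refine List.mem_cons_of_mem _ (List.mem_cons_of_mem _ ?_)
        exact List.mem_flatMap.2 ⟨i, Finset.mem_toList.2 hi, List.mem_map.2 ⟨pp, hpp, rfl⟩⟩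
      have hxv : x (i.1.1 * wordEval S pp.1) = pp.2 := hxU pp hpp
      simp only [hx] at hxv
      rw [if_pos helem] at hxv
      show (bl.getD (label (i.1.1 * wordEval S pp.1)) false == pp.2) = true
      rw [hxv]
      simp

theorem hard_dir {G : Type} [Group G] {k : ℕ} {S : Fin k → G} (hS : IsGenData S)
    (hWP : REPred (· ∈ WP S)) (hEff : EffectivelyClosed S (Xle1 G)) :
    REPred fun w : List (Fin k) => ¬ (w ∈ WP S) := by
  obtain ⟨τ, hτ⟩ : ∃ τ : Fin k → Fin k, ∀ i, S (τ i) = (S i)⁻¹ :=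
    ⟨fun i => (hS.2.1 i).choose, fun i => (hS.2.1 i).choose_spec⟩
  obtain ⟨C, hC, hX⟩ := hEff
  obtain ⟨cW, hcW⟩ := rePred_iff_evaln hWP
  obtain ⟨cC, hcC⟩ := rePred_iff_evaln hC
  have specW : ∀ v : List (Fin k),
      wordEval S v = 1 ↔ ∃ s, (evaln s cW (Encodable.encode v)).isSome := hcW
  have hre : REPred fun w : List (Fin k) => ∃ t : Wit k, verif τ cW cC w t = true :=
    rePred_of_exists_bool (primrec_verif τ cW cC).to_comp
  have hiff : (fun w : List (Fin k) => ∃ t : Wit k, verif τ cW cC w t = true)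
      = fun w : List (Fin k) => ¬ (w ∈ WP S) := by
    funext w
    refine propext ⟨fun ⟨t, ht⟩ => verif_sound hτ specW hcC hX ht,
      fun hnw => verif_complete hτ hS.2.2 specW hcC hX hnw⟩
  exact hiff ▸ hre

theorem easy_dir {G : Type} [Group G] {k : ℕ} {S : Fin k → G} (hS : IsGenData S)
    (h : ComputablePred (· ∈ WP S)) : EffectivelyClosed S (Xle1 G) := by
  obtain ⟨τ, hτ⟩ : ∃ τ : Fin k → Fin k, ∀ i, S (τ i) = (S i)⁻¹ :=
    ⟨fun i => (hS.2.1 i).choose, fun i => (hS.2.1 i).choose_spec⟩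
  obtain ⟨χ, hχcomp, hχ⟩ := ComputablePred.computable_iff.1 h
  have hWPχ : ∀ v : List (Fin k), wordEval S v = 1 ↔ χ v = true := by
    intro v
    exact iff_of_eq (congrFun hχ v)
  set F : PatternCoding k Bool → Bool := fun c =>
    ((decide (c.map Prod.snd = [true, true])) &&
      !(χ (invW τ (c.getD 0 ([], true)).1 ++ (c.getD 1 ([], true)).1))) with hF
  have hFcomp : Computable F := by
    have part1 : Primrec fun c : PatternCoding k Bool =>
        decide (c.map Prod.snd = [true, true]) :=
      Primrec.eq.comp (Primrec.list_map Primrec.id (Primrec.snd.comp Primrec.snd).to₂)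
        (Primrec.const _) |>.decide
    have hget0 : Primrec fun c : PatternCoding k Bool => (c.getD 0 ([], true)).1 :=
      Primrec.fst.comp ((Primrec.list_getD ([], true)).comp Primrec.id (Primrec.const 0))
    have hget1 : Primrec fun c : PatternCoding k Bool => (c.getD 1 ([], true)).1 :=
      Primrec.fst.comp ((Primrec.list_getD ([], true)).comp Primrec.id (Primrec.const 1))
    have harg : Primrec fun c : PatternCoding k Bool =>
        invW τ (c.getD 0 ([], true)).1 ++ (c.getD 1 ([], true)).1 :=
      Primrec.list_append.comp ((primrec_invW τ).comp hget0) hget1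
    have part2 : Computable fun c : PatternCoding k Bool =>
        !(χ (invW τ (c.getD 0 ([], true)).1 ++ (c.getD 1 ([], true)).1)) :=
      (Primrec.dom_finite (fun b : Bool => !b)).to_comp.comp (hχcomp.comp harg.to_comp)
    exact (Primrec.dom_finite (fun p : Bool × Bool => p.1 && p.2)).to_comp.comp
      (part1.to_comp.pair part2)
  have hFspec : ∀ c : PatternCoding k Bool, F c = true ↔
      ∃ u v : List (Fin k), c = [(u, true), (v, true)] ∧ wordEval S u ≠ wordEval S v := by
    intro c
    constructor
    · intro hFc
      simp only [hF, Bool.and_eq_true] at hFc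
      obtain ⟨h1, h2⟩ := hFc
      have h1' : c.map Prod.snd = [true, true] := of_decide_eq_true h1
      cases c with
      | nil => simp at h1'
      | cons p0 c1 =>
      cases c1 with
      | nil => simp at h1'
      | cons p1 c2 =>
      cases c2 with
      | cons p2 c3 => simp at h1'
      | nil =>
        simp only [List.map_cons, List.map_nil, List.cons.injEq, and_true] at h1'
        obtain ⟨hp0, hp1⟩ := h1'
        refine ⟨p0.1, p1.1, ?_, ?_⟩
        · rw [show p0 = (p0.1, true) from Prod.ext rfl hp0,
            show p1 = (p1.1, true) from Prod.ext rfl hp1]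
        · intro heq
          have harg1 : wordEval S (invW τ ([p0, p1].getD 0 ([], true)).1 ++
              ([p0, p1].getD 1 ([], true)).1) = 1 := by
            show wordEval S (invW τ p0.1 ++ p1.1) = 1
            rw [wordEval_append, wordEval_invW hτ, heq, inv_mul_cancel]
          have := (hWPχ _).1 harg1
          rw [this] at h2
          simp at h2
    · rintro ⟨u, v, rfl, hne⟩
      have harg : wordEval S (invW τ u ++ v) ≠ 1 := by
        rw [wordEval_append, wordEval_invW hτ]
        intro hcon
        exact hne (inv_mul_eq_one.1 hcon)
      have hχf : χ (invW τ u ++ v) = false := by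
        rcases Bool.eq_false_or_eq_true (χ (invW τ u ++ v)) with hb | hb
        · exact absurd ((hWPχ _).2 hb) harg
        · exact hb
      show ((decide (([(u, true), (v, true)] : PatternCoding k Bool).map Prod.snd
          = [true, true])) && !(χ (invW τ u ++ v))) = true
      rw [hχf]
      simp
  refine ⟨{c | F c = true}, ComputablePred.to_re
    (ComputablePred.computable_iff.2 ⟨F, hFcomp, rfl⟩), ?_⟩
  ext x
  constructor
  · intro hx
    rintro ⟨g, c, hcC, hocc⟩
    obtain ⟨u, v, rfl, hne⟩ := (hFspec c).1 hcC
    have h1 : x (g * wordEval S u) = true := hocc (u, true) (by simp)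
    have h2 : x (g * wordEval S v) = true := hocc (v, true) (by simp)
    exact hne (mul_left_cancel (hx _ _ h1 h2))
  · intro hx g h' hg hh
    by_contra hne
    obtain ⟨u, hu⟩ := exists_word hτ hS.2.2 g
    obtain ⟨v, hv⟩ := exists_word hτ hS.2.2 h'
    apply hx
    refine ⟨1, [(u, true), (v, true)],
      (hFspec _).2 ⟨u, v, rfl, by rw [hu, hv]; exact hne⟩, ?_⟩
    rintro p hp
    have hp' : p = (u, true) ∨ p = (v, true) := by simpa using hp
    rcases hp' with rfl | rfl
    · show x (1 * wordEval S u) = true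
      rw [one_mul, hu]; exact hg
    · show x (1 * wordEval S v) = true
      rw [one_mul, hv]; exact hh

end Statement10

/-- For a recursively presented group `G`, the one-or-less subshift
`X_{≤1}` is effectively closed if and only if the word problem of `G` is decidable. -/
theorem xle1_effectivelyClosed_iff_wp_decidable
    {G : Type} [Group G] {k : ℕ} (S : Fin k → G) (hS : IsGenData S)
    (hWP : REPred (· ∈ WP S)) :
    EffectivelyClosed S (Xle1 G) ↔ ComputablePred (· ∈ WP S) := by
  constructor
  · intro hEff
    exact ComputablePred.computable_iff_re_compl_re'.2 ⟨hWP, hard_dir hS hWP hEff⟩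
  · intro h
    exact easy_dir hS h

end SDG
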